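/- If f is convex and differentiable, and x_t evolves by continuous-time mirror descent dz_t/dt = -∇f(x_t) with x_t = ∇Φ*(z_t), then the time-averaged suboptimality satisfies (1/T)∫₀ᵀ (f(x_t) - f(x*)) dt ≤ D²_{Φ,X}/(2T), where x* is a minimizer of f over X. -/

import Mathlib

open MeasureTheory Pointwise

local notation "E" d => EuclideanSpace ℝ (Fin d)

/-- Gradient inequality for convex functions. -/
lemma aux_grad_ineq {d : ℕ} {f : EuclideanSpace ℝ (Fin d) → ℝ}
    (hf : ConvexOn ℝ Set.univ f) {g w : EuclideanSpace ℝ (Fin d)}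
    (hg : HasGradientAt f g w) (y : EuclideanSpace ℝ (Fin d)) :
    f w + (inner ℝ g (y - w) : ℝ) ≤ f y := by
  by_cases hyw : y = w
  · simp [hyw]
  · set ψ : ℝ → ℝ := fun s => f (w + s • (y - w)) with hψ
    have hc : ∀ s : ℝ, HasDerivAt (fun s : ℝ => w + s • (y - w)) (y - w) s := by
      intro s
      simpa using ((hasDerivAt_id s).smul_const (y - w)).const_add w
    have hψd : HasDerivAt ψ (inner ℝ g (y - w) : ℝ) 0 := by
      have hg' : HasFDerivAt f (InnerProductSpace.toDual ℝ _ g) (w + (0:ℝ) • (y - w)) := by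
        simpa using hasGradientAt_iff_hasFDerivAt.mp hg
      have := hg'.comp_hasDerivAt (x := (0:ℝ)) (hc 0)
      simpa [InnerProductSpace.toDual_apply_apply, Function.comp_def] using this
    have hψconv : ConvexOn ℝ Set.univ ψ := by
      have := hf.comp_affineMap (AffineMap.lineMap w y)
      have heq : ψ = f ∘ (AffineMap.lineMap w y) := by
        funext s
        simp [ψ, AffineMap.lineMap_apply, add_comm]
      rw [heq]
      simpa using this
    have hs := hψconv.le_slope_of_hasDerivAt (Set.mem_univ 0) (Set.mem_univ 1)
      zero_lt_one hψd
    have : slope ψ 0 1 = f y - f w := by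
      simp [slope_def_field, ψ]
    rw [this] at hs
    linarith

/-- The gradient of a convex differentiable function is bounded on compact sets. -/
lemma aux_grad_bound {d : ℕ} {f : EuclideanSpace ℝ (Fin d) → ℝ}
    {F : EuclideanSpace ℝ (Fin d) → EuclideanSpace ℝ (Fin d)}
    (hf : ConvexOn ℝ Set.univ f) (hF : ∀ w, HasGradientAt f (F w) w)
    {K : Set (EuclideanSpace ℝ (Fin d))} (hK : IsCompact K) :
    ∃ C : ℝ, 0 ≤ C ∧ ∀ w ∈ K, ‖F w‖ ≤ C := by
  have hfc : Continuous f := by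
    rw [continuous_iff_continuousAt]
    exact fun w => (hF w).differentiableAt.continuousAt
  have hK1 : IsCompact (K + Metric.closedBall (0 : EuclideanSpace ℝ (Fin d)) 1) :=
    hK.add (isCompact_closedBall 0 1)
  obtain ⟨M, hM⟩ := (hK1.union hK).exists_bound_of_continuousOn hfc.continuousOn
  refine ⟨max (2 * M) 0, le_max_right _ _, ?_⟩
  intro w hw
  refine le_trans ?_ (le_max_left _ _)
  by_cases h0 : F w = 0
  · have h1 := hM _ (Set.mem_union_right _ hw)
    have hmem : w + (0 : EuclideanSpace ℝ (Fin d)) ∈ K + Metric.closedBall 0 1 :=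
      Set.add_mem_add hw (by simp)
    have h2 := hM _ (Set.mem_union_left _ hmem)
    simp only [h0, norm_zero]
    have := abs_le.mp h1
    have := abs_le.mp h2
    linarith
  · have hu : ‖(‖F w‖⁻¹ • F w)‖ = 1 := by
      rw [norm_smul, norm_inv, norm_norm, inv_mul_cancel₀ (norm_ne_zero_iff.mpr h0)]
    have hmem : w + ‖F w‖⁻¹ • F w ∈ K + Metric.closedBall 0 1 :=
      Set.add_mem_add hw (by simp [Metric.mem_closedBall, hu.le])
    have hkey := aux_grad_ineq hf (hF w) (w + ‖F w‖⁻¹ • F w)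
    have hinner : (inner ℝ (F w) (w + ‖F w‖⁻¹ • F w - w) : ℝ) = ‖F w‖ := by
      rw [add_sub_cancel_left, real_inner_smul_right, real_inner_self_eq_norm_sq, sq,
        ← mul_assoc, inv_mul_cancel₀ (norm_ne_zero_iff.mpr h0), one_mul]
    rw [hinner] at hkey
    have h1 := hM _ (Set.mem_union_left _ hmem)
    have h2 := hM w (Set.mem_union_right _ hw)
    have ha1 := abs_le.mp h1
    have ha2 := abs_le.mp h2
    linarith [ha1.1, ha1.2, ha2.1, ha2.2]

/-- The gradient of an (everywhere differentiable) function is measurable. -/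
lemma aux_grad_meas {d : ℕ} {f : EuclideanSpace ℝ (Fin d) → ℝ}
    {F : EuclideanSpace ℝ (Fin d) → EuclideanSpace ℝ (Fin d)}
    (hF : ∀ w, HasGradientAt f (F w) w) : Measurable F := by
  have hfc : Continuous f := by
    rw [continuous_iff_continuousAt]
    exact fun w => (hF w).differentiableAt.continuousAt
  set e : Fin d → EuclideanSpace ℝ (Fin d) := fun i => EuclideanSpace.single i 1 with he
  set G : ℕ → EuclideanSpace ℝ (Fin d) → EuclideanSpace ℝ (Fin d) := fun n w =>
    ∑ i, (slope (fun s : ℝ => f (w + s • e i)) 0 (((n : ℝ) + 1)⁻¹)) • e i with hG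
  have hGmeas : ∀ n, Measurable (G n) := by
    intro n
    refine Continuous.measurable ?_
    refine continuous_finset_sum _ fun i _ => Continuous.smul (f := fun w => slope (fun s : ℝ => f (w + s • e i)) 0 (((n : ℝ) + 1)⁻¹)) (g := fun _ => e i) ?_ continuous_const
    simp only [slope_def_field]
    fun_prop
  refine measurable_of_tendsto_metrizable hGmeas ?_
  rw [tendsto_pi_nhds]
  intro w
  have hexp : F w = ∑ i, (inner ℝ (F w) (e i) : ℝ) • e i := by
    have hb := (EuclideanSpace.basisFun (Fin d) ℝ).sum_repr (F w)
    simp only [EuclideanSpace.basisFun_repr, EuclideanSpace.basisFun_apply] at hb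
    refine hb.symm.trans (Finset.sum_congr rfl fun i _ => ?_)
    simp [he, EuclideanSpace.inner_single_right]
  rw [hexp]
  refine tendsto_finset_sum _ fun i _ => Filter.Tendsto.smul_const ?_ (e i)
  -- derivative of s ↦ f (w + s • e i) at 0 is ⟪F w, e i⟫
  have hc : HasDerivAt (fun s : ℝ => w + s • e i) (e i) 0 := by
    simpa using ((hasDerivAt_id (0:ℝ)).smul_const (e i)).const_add w
  have hg' : HasFDerivAt f (InnerProductSpace.toDual ℝ _ (F w)) (w + (0:ℝ) • e i) := by
    simpa using hasGradientAt_iff_hasFDerivAt.mp (hF w)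
  have hψ : HasDerivAt (fun s : ℝ => f (w + s • e i)) (inner ℝ (F w) (e i) : ℝ) 0 := by
    have := hg'.comp_hasDerivAt (x := (0:ℝ)) hc
    simpa [InnerProductSpace.toDual_apply_apply, Function.comp_def] using this
  have hslope := hasDerivAt_iff_tendsto_slope.mp hψ
  have hsn : Filter.Tendsto (fun n : ℕ => ((n : ℝ) + 1)⁻¹) Filter.atTop (nhdsWithin 0 {(0:ℝ)}ᶜ) := by
    apply tendsto_nhdsWithin_of_tendsto_nhds_of_eventually_within
    · exact tendsto_one_div_add_atTop_nhds_zero_nat.congr (by intro n; rw [one_div])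
    · filter_upwards with n
      simp only [Set.mem_compl_iff, Set.mem_singleton_iff]
      positivity
  exact hslope.comp hsn


/-- Convergence of continuous-time mirror descent for a convex objective:
the time-averaged suboptimality is bounded by `D²_{Φ,X} / (2T)`. -/
theorem ismd_md_convex_convergence
    (d : ℕ)
    (f Φstar : EuclideanSpace ℝ (Fin d) → ℝ)
    (f' gΦstar : EuclideanSpace ℝ (Fin d) → EuclideanSpace ℝ (Fin d))
    (X : Set (EuclideanSpace ℝ (Fin d)))
    (z x : ℝ → EuclideanSpace ℝ (Fin d))
    (zstar xstar : EuclideanSpace ℝ (Fin d))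
    (DPhiX T : ℝ) (hT : 0 < T)
    -- f is convex and differentiable with gradient f'
    (hf_conv : ConvexOn ℝ Set.univ f)
    (hf_grad : ∀ w, HasGradientAt f (f' w) w)
    -- Φ* is the convex conjugate of the mirror map, with gradient gΦ* mapping into X
    (hΦ_grad : ∀ w, HasGradientAt Φstar (gΦstar w) w)
    (hΦ_conv : ConvexOn ℝ Set.univ Φstar)
    (hrange : ∀ w, gΦstar w ∈ X)
    -- mirror descent dynamics: dz_t/dt = -∇f(x_t), x_t = ∇Φ*(z_t)
    (hdyn : ∀ t, HasDerivAt z (-(f' (x t))) t)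
    (hx : ∀ t, x t = gΦstar (z t))
    -- x* minimizes f over X, with z* a mirror point of x*
    (hmin : xstar ∈ X ∧ ∀ w ∈ X, f xstar ≤ f w)
    (hstar : gΦstar zstar = xstar)
    -- the initial Bregman divergence D_{Φ*}(z_0,z*) = D_Φ(x*,x_0) is at most D²_{Φ,X}/2
    (hD0 : Φstar (z 0) - Φstar zstar - (inner ℝ (gΦstar zstar) (z 0 - zstar) : ℝ)
      ≤ DPhiX ^ 2 / 2) :
    (1 / T) * ∫ t in (0:ℝ)..T, (f (x t) - f xstar) ≤ DPhiX ^ 2 / (2 * T) := by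
  set V : ℝ → ℝ := fun t => Φstar (z t) - Φstar zstar - (inner ℝ xstar (z t - zstar) : ℝ)
    with hVdef
  set φ : ℝ → ℝ := fun t => (inner ℝ (x t - xstar) (-(f' (x t))) : ℝ) with hφdef
  -- derivative of V
  have hV : ∀ t, HasDerivAt V (φ t) t := by
    intro t
    have p1 : HasDerivAt (fun t => Φstar (z t))
        (inner ℝ (gΦstar (z t)) (-(f' (x t))) : ℝ) t := by
      have := (hasGradientAt_iff_hasFDerivAt.mp (hΦ_grad (z t))).comp_hasDerivAt t (hdyn t)
      simpa [InnerProductSpace.toDual_apply_apply, Function.comp_def] using this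
    have p2 : HasDerivAt (fun t => (inner ℝ xstar (z t - zstar) : ℝ))
        (inner ℝ xstar (-(f' (x t))) : ℝ) t := by
      have := (innerSL ℝ xstar).hasFDerivAt.comp_hasDerivAt t ((hdyn t).sub_const zstar)
      simpa [Function.comp_def] using this
    have h3 := (p1.sub_const (Φstar zstar)).sub p2
    have hφt : φ t = (inner ℝ (gΦstar (z t)) (-(f' (x t))) : ℝ)
        - (inner ℝ xstar (-(f' (x t))) : ℝ) := by
      show (inner ℝ (x t - xstar) (-(f' (x t))) : ℝ) = _
      rw [← inner_sub_left, hx t]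
    rw [hφt]
    exact h3
  -- measurability of φ
  have hφmeas : Measurable φ := by
    have : φ = deriv V := funext fun t => ((hV t).deriv).symm
    rw [this]
    exact measurable_deriv V
  -- continuity of z, compactness
  have hzc : Continuous z := continuous_iff_continuousAt.mpr fun t => (hdyn t).continuousAt
  have hK : IsCompact (z '' Set.Icc 0 T) := isCompact_Icc.image hzc
  obtain ⟨C1, hC1n, hC1⟩ := aux_grad_bound hΦ_conv hΦ_grad hK
  obtain ⟨C2, hC2n, hC2⟩ := aux_grad_bound hf_conv hf_grad
    (isCompact_closedBall (0 : EuclideanSpace ℝ (Fin d)) C1)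
  have hxb : ∀ t ∈ Set.Icc (0:ℝ) T, ‖x t‖ ≤ C1 := by
    intro t ht
    rw [hx t]
    exact hC1 _ ⟨t, ht, rfl⟩
  have hfb : ∀ t ∈ Set.Icc (0:ℝ) T, ‖f' (x t)‖ ≤ C2 := by
    intro t ht
    exact hC2 _ (by simpa [Metric.mem_closedBall] using hxb t ht)
  set B : ℝ := (C1 + ‖xstar‖) * C2 with hBdef
  have hφbd : ∀ t ∈ Set.Icc (0:ℝ) T, ‖φ t‖ ≤ B := by
    intro t ht
    calc ‖φ t‖ ≤ ‖x t - xstar‖ * ‖-(f' (x t))‖ := norm_inner_le_norm _ _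
      _ ≤ (C1 + ‖xstar‖) * C2 := by
          rw [norm_neg]
          exact mul_le_mul (le_trans (norm_sub_le _ _)
            (add_le_add_left (hxb t ht) _)) (hfb t ht) (norm_nonneg _)
            (by positivity)
  -- the suboptimality function
  set g : ℝ → ℝ := fun t => f (x t) - f xstar with hgdef
  have hfc : Continuous f :=
    continuous_iff_continuousAt.mpr fun w => (hf_grad w).differentiableAt.continuousAt
  have hxmeas : Measurable x := by
    have : x = fun t => gΦstar (z t) := funext hx
    rw [this]
    exact (aux_grad_meas hΦ_grad).comp hzc.measurable
  have hgmeas : Measurable g := (hfc.measurable.comp hxmeas).sub measurable_const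
  have hg0 : ∀ t, 0 ≤ g t := fun t =>
    sub_nonneg.mpr (hmin.2 (x t) (hx t ▸ hrange (z t)))
  have hgφ : ∀ t, g t ≤ -φ t := by
    intro t
    have hkey := aux_grad_ineq hf_conv (hf_grad (x t)) xstar
    have heq : (inner ℝ (f' (x t)) (xstar - x t) : ℝ) = φ t := by
      show _ = (inner ℝ (x t - xstar) (-(f' (x t))) : ℝ)
      rw [real_inner_comm, ← neg_sub (x t) xstar, inner_neg_left, inner_neg_right]
    rw [heq] at hkey
    show f (x t) - f xstar ≤ -φ t
    linarith
  have hgbd : ∀ t ∈ Set.Icc (0:ℝ) T, ‖g t‖ ≤ B := by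
    intro t ht
    rw [Real.norm_eq_abs, abs_of_nonneg (hg0 t)]
    refine le_trans (hgφ t) ?_
    calc -φ t ≤ ‖φ t‖ := (neg_le_abs _)
      _ ≤ B := hφbd t ht
  -- integrability
  have hφint : IntervalIntegrable φ volume 0 T := by
    rw [intervalIntegrable_iff_integrableOn_Ioc_of_le hT.le]
    refine Integrable.mono' (g := fun _ => B) ((integrableOn_const_iff).mpr (Or.inr measure_Ioc_lt_top))
      hφmeas.aestronglyMeasurable.restrict ?_
    refine (ae_restrict_iff' measurableSet_Ioc).mpr (Filter.Eventually.of_forall fun t ht => ?_)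
    exact hφbd t (Set.Ioc_subset_Icc_self ht)
  have hgint : IntervalIntegrable g volume 0 T := by
    rw [intervalIntegrable_iff_integrableOn_Ioc_of_le hT.le]
    refine Integrable.mono' (g := fun _ => B) ((integrableOn_const_iff).mpr (Or.inr measure_Ioc_lt_top))
      hgmeas.aestronglyMeasurable.restrict ?_
    refine (ae_restrict_iff' measurableSet_Ioc).mpr (Filter.Eventually.of_forall fun t ht => ?_)
    exact hgbd t (Set.Ioc_subset_Icc_self ht)
  -- FTC
  have hFTC : ∫ t in (0:ℝ)..T, φ t = V T - V 0 :=
    intervalIntegral.integral_eq_sub_of_hasDerivAt (fun t _ => hV t) hφint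
  -- V T ≥ 0
  have hVT : 0 ≤ V T := by
    have := aux_grad_ineq hΦ_conv (hΦ_grad zstar) (z T)
    rw [hstar] at this
    simp only [hVdef]
    linarith
  -- V 0 ≤ DPhiX^2/2
  have hV0 : V 0 ≤ DPhiX ^ 2 / 2 := by
    rw [hstar] at hD0
    simpa [hVdef] using hD0
  -- combine
  have hmono : ∫ t in (0:ℝ)..T, g t ≤ ∫ t in (0:ℝ)..T, (-φ t) :=
    intervalIntegral.integral_mono_on hT.le hgint hφint.neg fun t _ => hgφ t
  have hneg : ∫ t in (0:ℝ)..T, (-φ t) = V 0 - V T := by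
    rw [intervalIntegral.integral_neg, hFTC]
    ring
  have h2 : ∫ t in (0:ℝ)..T, (-φ t) ≤ DPhiX ^ 2 / 2 := by
    rw [hneg]; exact le_trans (sub_le_self _ hVT) hV0
  have hbound : ∫ t in (0:ℝ)..T, g t ≤ DPhiX ^ 2 / 2 := le_trans hmono h2
  have h1T : (0:ℝ) ≤ 1 / T := by positivity
  calc (1 / T) * ∫ t in (0:ℝ)..T, (f (x t) - f xstar)
      ≤ (1 / T) * (DPhiX ^ 2 / 2) := mul_le_mul_of_nonneg_left hbound h1T
    _ = DPhiX ^ 2 / (2 * T) := by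
        rw [one_div_mul_eq_div, div_div]
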